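/- arXiv:1509.02581 — 2 statements merged into one kernel-verified Lean document; each statement's English description precedes it below -/
import Mathlib

section
/- Littlewood's identity: for any partitions β, α, γ, one has s_β ∗ (s_α · s_γ) = Σ_λ (s_{β/λ} ∗ s_α) · (s_λ ∗ s_γ), where the sum is over all partitions λ. -/
open scoped TensorProduct Classical

noncomputable section

/-- The single-row Young diagram with `k` boxes, whose Schur function is `h_k`
and whose power sum is `p_k`. -/
def rowDiagram (k : ℕ) : YoungDiagram :=
  YoungDiagram.ofRowLens [k] (List.sortedGE_iff_pairwise.mpr (List.pairwise_singleton _ k))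

/-- The quantity `z_λ = ∏ i^{m_i} m_i!` attached to a partition (Young diagram). -/
def zee (μ : YoungDiagram) : ℚ :=
  ((μ.rowLens.prod * (μ.rowLens.dedup.map fun i => (μ.rowLens.count i).factorial).prod : ℕ) : ℚ)

/-- The ring of symmetric functions over `ℚ`, presented with its Schur basis `s`,
its power-sum basis `p`, the Hall inner product (for which the Schur functions are
orthonormal and `⟨p_λ, p_μ⟩ = δ_{λμ} z_λ`), the skewing operators `D f` (adjoint of
multiplication by `f`), and the Kronecker product `kron`
(determined by `p_λ ∗ p_μ = δ_{λμ} z_λ p_λ`). -/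
structure SymmFn (Λ : Type*) [CommRing Λ] [Algebra ℚ Λ] where
  /-- the Schur basis -/
  s : Module.Basis YoungDiagram ℚ Λ
  /-- the power-sum basis -/
  p : Module.Basis YoungDiagram ℚ Λ
  /-- the Hall inner product -/
  inner : Λ →ₗ[ℚ] Λ →ₗ[ℚ] ℚ
  inner_symm : ∀ f g, inner f g = inner g f
  inner_schur : ∀ μ ν, inner (s μ) (s ν) = if μ = ν then 1 else 0
  inner_power : ∀ μ ν, inner (p μ) (p ν) = if μ = ν then zee μ else 0
  power_mul : ∀ μ : YoungDiagram, p μ = (μ.rowLens.map fun k => p (rowDiagram k)).prod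
  /-- the skewing operator `D f`, adjoint of multiplication by `f` -/
  D : Λ → Λ →ₗ[ℚ] Λ
  D_adjoint : ∀ f g h, inner (D f g) h = inner g (f * h)
  /-- the Kronecker (internal) product -/
  kron : Λ →ₗ[ℚ] Λ →ₗ[ℚ] Λ
  kron_power : ∀ μ ν, kron (p μ) (p ν) = if μ = ν then zee μ • p μ else 0

namespace SymmFn

variable {Λ : Type*} [CommRing Λ] [Algebra ℚ Λ] (S : SymmFn Λ)

/-- The operator `U f` of multiplication by `f`. -/
def U (_S : SymmFn Λ) (f : Λ) : Λ →ₗ[ℚ] Λ := LinearMap.mulLeft ℚ f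

/-- The skew Schur function `s_{α/θ} = D_{s_θ}(s_α)`. -/
def skew (α θ : YoungDiagram) : Λ := S.D (S.s θ) (S.s α)


/-- The Young diagram whose multiset of row lengths is the union of those of `μ` and `ν`. -/
def unionDiagram (μ ν : YoungDiagram) : YoungDiagram :=
  YoungDiagram.ofRowLens (Multiset.sort (↑μ.rowLens + ↑ν.rowLens) (· ≥ ·))
    (List.sortedGE_iff_pairwise.mpr (Multiset.pairwise_sort _ _))

lemma p_union (μ ν : YoungDiagram) : S.p (unionDiagram μ ν) = S.p μ * S.p ν := by
  have hpos : ∀ x ∈ Multiset.sort ((↑μ.rowLens + ↑ν.rowLens : Multiset ℕ)) (· ≥ ·), 0 < x := by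
    intro x hx
    have hx' : x ∈ (↑μ.rowLens + ↑ν.rowLens : Multiset ℕ) := by
      rw [← Multiset.mem_sort (· ≥ ·)]; exact hx
    rcases Multiset.mem_add.mp hx' with h | h
    · exact μ.pos_of_mem_rowLens x (by simpa using h)
    · exact ν.pos_of_mem_rowLens x (by simpa using h)
  rw [S.power_mul (unionDiagram μ ν), S.power_mul μ, S.power_mul ν, unionDiagram,
    YoungDiagram.rowLens_ofRowLens_eq_self hpos]
  have hperm : (Multiset.sort ((↑μ.rowLens + ↑ν.rowLens : Multiset ℕ)) (· ≥ ·)).Perm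
      (μ.rowLens ++ ν.rowLens) := by
    rw [← Multiset.coe_eq_coe]
    simpa using Multiset.sort_eq ((↑μ.rowLens + ↑ν.rowLens : Multiset ℕ)) (· ≥ ·)
  rw [(hperm.map _).prod_eq, List.map_append, List.prod_append]

lemma inner_s (f : Λ) (l : YoungDiagram) : S.inner f (S.s l) = S.s.repr f l := by
  have h : (S.inner.flip (S.s l)) =
      (Finsupp.lapply l).comp (S.s.repr : Λ →ₗ[ℚ] (YoungDiagram →₀ ℚ)) := by
    apply S.s.ext
    intro μ
    simp [S.inner_schur, Finsupp.single_apply, eq_comm]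
  exact DFunLike.congr_fun h f

lemma kron_p (f : Λ) (μ : YoungDiagram) :
    S.kron f (S.p μ) = S.inner f (S.p μ) • S.p μ := by
  have h : (S.kron.flip (S.p μ)) = (S.inner.flip (S.p μ)).smulRight (S.p μ) := by
    apply S.p.ext
    intro ν
    simp only [LinearMap.flip_apply, LinearMap.smulRight_apply, S.kron_power, S.inner_power]
    split_ifs with hh
    · subst hh; rfl
    · simp
  exact DFunLike.congr_fun h f

/-- Littlewood's identity:
`s_β ∗ (s_α · s_γ) = ∑_λ (s_{β/λ} ∗ s_α) · (s_λ ∗ s_γ)`. -/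
theorem littlewood (α β γ : YoungDiagram) :
    S.kron (S.s β) (S.s α * S.s γ) =
      ∑ᶠ l : YoungDiagram, S.kron (S.skew β l) (S.s α) * S.kron (S.s l) (S.s γ) := by
  classical
  set a : YoungDiagram →₀ ℚ := S.p.repr (S.s α) with ha
  set c : YoungDiagram →₀ ℚ := S.p.repr (S.s γ) with hc
  set F : Finset YoungDiagram := c.support.biUnion (fun ν => (S.s.repr (S.p ν)).support)
    with hFdef
  have hαexp : S.s α = ∑ μ ∈ a.support, a μ • S.p μ := by
    conv_lhs => rw [← S.p.linearCombination_repr (S.s α)]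
    rw [Finsupp.linearCombination_apply]
    rfl
  have hγexp : S.s γ = ∑ ν ∈ c.support, c ν • S.p ν := by
    conv_lhs => rw [← S.p.linearCombination_repr (S.s γ)]
    rw [Finsupp.linearCombination_apply]
    rfl
  have hpν : ∀ ν ∈ c.support, S.p ν = ∑ l ∈ F, S.s.repr (S.p ν) l • S.s l := by
    intro ν hν
    have h2 : ∑ l ∈ (S.s.repr (S.p ν)).support, S.s.repr (S.p ν) l • S.s l
        = ∑ l ∈ F, S.s.repr (S.p ν) l • S.s l := by
      apply Finset.sum_subset
      · rw [hFdef]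
        exact Finset.subset_biUnion_of_mem (fun ν => (S.s.repr (S.p ν)).support) hν
      · intro l _ hl
        rw [Finsupp.notMem_support_iff.mp hl, zero_smul]
    rw [← h2]
    conv_lhs => rw [← S.s.linearCombination_repr (S.p ν)]
    rw [Finsupp.linearCombination_apply]
    rfl
  -- the key scalar identity
  have key : ∀ μ : YoungDiagram, ∀ ν ∈ c.support,
      ∑ l ∈ F, S.inner (S.skew β l) (S.p μ) * S.inner (S.s l) (S.p ν)
        = S.inner (S.s β) (S.p μ * S.p ν) := by
    intro μ ν hν
    calc ∑ l ∈ F, S.inner (S.skew β l) (S.p μ) * S.inner (S.s l) (S.p ν)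
        = ∑ l ∈ F, S.inner (S.s β) ((S.s.repr (S.p ν) l) • (S.s l * S.p μ)) := by
          refine Finset.sum_congr rfl fun l _ => ?_
          rw [skew, S.D_adjoint, map_smul, ← S.inner_s (S.p ν) l, S.inner_symm (S.p ν) (S.s l),
            smul_eq_mul, mul_comm]
      _ = S.inner (S.s β) ((∑ l ∈ F, (S.s.repr (S.p ν) l) • S.s l) * S.p μ) := by
          rw [← map_sum, Finset.sum_mul]
          congr 1
          exact Finset.sum_congr rfl fun l _ => (smul_mul_assoc _ _ _).symm
      _ = S.inner (S.s β) (S.p ν * S.p μ) := by rw [← hpν ν hν]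
      _ = S.inner (S.s β) (S.p μ * S.p ν) := by rw [mul_comm]
  -- the summand has support inside F
  have hsupp : (Function.support fun l =>
      S.kron (S.skew β l) (S.s α) * S.kron (S.s l) (S.s γ)) ⊆ ↑F := by
    intro l hl
    by_contra hlF
    apply hl
    have hz : S.kron (S.s l) (S.s γ) = 0 := by
      conv_lhs => rw [hγexp]
      rw [map_sum]
      refine Finset.sum_eq_zero fun ν hν => ?_
      have h0 : S.s.repr (S.p ν) l = 0 := by
        rw [← Finsupp.notMem_support_iff]
        intro hmem
        exact hlF (Finset.mem_coe.mpr (Finset.mem_biUnion.mpr ⟨ν, hν, hmem⟩))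
      rw [map_smul, S.kron_p, S.inner_symm, S.inner_s, h0, zero_smul, smul_zero]
    simp [hz]
  rw [finsum_eq_sum_of_support_subset _ hsupp]
  -- expand the right-hand side termwise
  have hR : ∀ l, S.kron (S.skew β l) (S.s α) * S.kron (S.s l) (S.s γ)
      = ∑ μ ∈ a.support, ∑ ν ∈ c.support, (a μ * c ν) •
          ((S.inner (S.skew β l) (S.p μ) * S.inner (S.s l) (S.p ν)) • (S.p μ * S.p ν)) := by
    intro l
    conv_lhs => rw [hαexp, hγexp, map_sum, map_sum]
    rw [Finset.sum_mul_sum]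
    refine Finset.sum_congr rfl fun μ _ => Finset.sum_congr rfl fun ν _ => ?_
    rw [map_smul, map_smul, S.kron_p, S.kron_p]
    rw [smul_smul, smul_smul, smul_mul_smul_comm, smul_smul]
    congr 1
    ring
  calc S.kron (S.s β) (S.s α * S.s γ)
      = ∑ μ ∈ a.support, ∑ ν ∈ c.support, (a μ * c ν) •
          (S.inner (S.s β) (S.p μ * S.p ν) • (S.p μ * S.p ν)) := by
        conv_lhs => rw [hαexp, hγexp]
        rw [Finset.sum_mul_sum, map_sum]
        refine Finset.sum_congr rfl fun μ _ => ?_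
        rw [map_sum]
        refine Finset.sum_congr rfl fun ν _ => ?_
        rw [smul_mul_smul_comm, map_smul, ← S.p_union, S.kron_p]
    _ = ∑ l ∈ F, S.kron (S.skew β l) (S.s α) * S.kron (S.s l) (S.s γ) := by
        symm
        calc ∑ l ∈ F, S.kron (S.skew β l) (S.s α) * S.kron (S.s l) (S.s γ)
            = ∑ l ∈ F, ∑ μ ∈ a.support, ∑ ν ∈ c.support, (a μ * c ν) •
                ((S.inner (S.skew β l) (S.p μ) * S.inner (S.s l) (S.p ν)) • (S.p μ * S.p ν)) :=
              Finset.sum_congr rfl fun l _ => hR l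
          _ = ∑ μ ∈ a.support, ∑ l ∈ F, ∑ ν ∈ c.support, (a μ * c ν) •
                ((S.inner (S.skew β l) (S.p μ) * S.inner (S.s l) (S.p ν)) • (S.p μ * S.p ν)) :=
              Finset.sum_comm
          _ = ∑ μ ∈ a.support, ∑ ν ∈ c.support, ∑ l ∈ F, (a μ * c ν) •
                ((S.inner (S.skew β l) (S.p μ) * S.inner (S.s l) (S.p ν)) • (S.p μ * S.p ν)) :=
              Finset.sum_congr rfl fun μ _ => Finset.sum_comm
          _ = ∑ μ ∈ a.support, ∑ ν ∈ c.support, (a μ * c ν) •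
                (S.inner (S.s β) (S.p μ * S.p ν) • (S.p μ * S.p ν)) := by
              refine Finset.sum_congr rfl fun μ _ => Finset.sum_congr rfl fun ν hν => ?_
              rw [← Finset.smul_sum, ← Finset.sum_smul, key μ ν hν]


end SymmFn
end
end

section
/- For any partition β and symmetric functions f, g, the skewing operator applied to a Kronecker product satisfies D_β(f ∗ g) = Σ_{λ,μ} g_{β,λ,μ} D_λ(f) ∗ D_μ(g), where g_{β,λ,μ} = ⟨s_β ∗ s_λ, s_μ⟩ are Kronecker coefficients and the sum is over all pairs of partitions λ, μ. -/
open scoped TensorProduct Classical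

noncomputable section

/-- union of two Young diagrams as multisets of rows -/
def uni (μ ν : YoungDiagram) : YoungDiagram :=
  YoungDiagram.ofRowLens (Multiset.sort ((μ.rowLens : Multiset ℕ) + (ν.rowLens : Multiset ℕ)) (· ≥ ·))
    (List.sortedGE_iff_pairwise.mpr (Multiset.pairwise_sort _ _))

theorem uni_rowLens (μ ν : YoungDiagram) :
    (uni μ ν).rowLens = Multiset.sort ((μ.rowLens : Multiset ℕ) + (ν.rowLens : Multiset ℕ)) (· ≥ ·) := by
  apply YoungDiagram.rowLens_ofRowLens_eq_self
  intro x hx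
  rw [Multiset.mem_sort, Multiset.mem_add] at hx
  rcases hx with hx | hx
  · exact μ.pos_of_mem_rowLens x hx
  · exact ν.pos_of_mem_rowLens x hx

theorem zee_ne_zero (μ : YoungDiagram) : zee μ ≠ 0 := by
  unfold zee
  rw [Nat.cast_ne_zero]
  have h1 : 0 < μ.rowLens.prod := List.prod_pos (fun x hx => μ.pos_of_mem_rowLens x hx)
  have h2 : 0 < (μ.rowLens.dedup.map fun i => (μ.rowLens.count i).factorial).prod := by
    apply List.prod_pos
    intro x hx
    rw [List.mem_map] at hx
    obtain ⟨i, -, rfl⟩ := hx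
    exact Nat.factorial_pos _
  exact (Nat.mul_pos h1 h2).ne'

namespace SymmFn

variable {Λ : Type*} [CommRing Λ] [Algebra ℚ Λ] (S : SymmFn Λ)

theorem p_mul (μ ν : YoungDiagram) : S.p μ * S.p ν = S.p (uni μ ν) := by
  rw [S.power_mul μ, S.power_mul ν, S.power_mul (uni μ ν), uni_rowLens,
    ← List.prod_append, ← List.map_append]
  apply List.Perm.prod_eq
  apply List.Perm.map
  rw [← Multiset.coe_eq_coe, Multiset.sort_eq, Multiset.coe_add]

theorem inner_s_repr (x : Λ) (ν : YoungDiagram) : S.inner x (S.s ν) = S.s.repr x ν := by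
  have h : S.inner.flip (S.s ν)
      = (Finsupp.lapply ν).comp (S.s.repr : Λ →ₗ[ℚ] (YoungDiagram →₀ ℚ)) := by
    apply S.s.ext
    intro μ
    simp [LinearMap.flip_apply, S.inner_schur, Module.Basis.repr_self, Finsupp.single_apply]
  exact LinearMap.congr_fun h x

theorem inner_p_repr (x : Λ) (ν : YoungDiagram) :
    S.inner x (S.p ν) = zee ν * S.p.repr x ν := by
  have h : S.inner.flip (S.p ν)
      = zee ν • ((Finsupp.lapply ν).comp (S.p.repr : Λ →ₗ[ℚ] (YoungDiagram →₀ ℚ))) := by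
    apply S.p.ext
    intro μ
    simp only [LinearMap.flip_apply, LinearMap.smul_apply, LinearMap.comp_apply,
      Module.Basis.repr_self, Finsupp.lapply_apply, Finsupp.single_apply, S.inner_power,
      smul_eq_mul]
    by_cases h : μ = ν
    · subst h; simp
    · simp [h]
  have := LinearMap.congr_fun h x
  simpa using this

theorem ext_inner_p {x y : Λ} (h : ∀ τ, S.inner x (S.p τ) = S.inner y (S.p τ)) : x = y := by
  apply S.p.repr.injective
  ext τ
  have h2 := h τ
  rw [S.inner_p_repr, S.inner_p_repr] at h2
  exact mul_left_cancel₀ (zee_ne_zero τ) h2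

theorem inner_kron_p (x y : Λ) (τ : YoungDiagram) :
    S.inner (S.kron x y) (S.p τ) = S.inner x (S.p τ) * S.inner y (S.p τ) := by
  have h : S.kron.compr₂ (S.inner.flip (S.p τ))
      = (LinearMap.mul ℚ ℚ).compl₁₂ (S.inner.flip (S.p τ)) (S.inner.flip (S.p τ)) := by
    apply S.p.ext
    intro μ
    apply S.p.ext
    intro ν
    simp only [LinearMap.compr₂_apply, LinearMap.compl₁₂_apply, LinearMap.flip_apply,
      LinearMap.mul_apply', S.kron_power]
    by_cases hμν : μ = ν
    · subst hμν
      rw [if_pos rfl, map_smul, LinearMap.smul_apply, S.inner_power, smul_eq_mul]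
      split_ifs <;> ring
    · rw [if_neg hμν, map_zero, LinearMap.zero_apply, S.inner_power μ τ, S.inner_power ν τ]
      split_ifs with h1 h2
      · exact absurd (h1.trans h2.symm) hμν
      all_goals ring
  exact LinearMap.congr_fun (LinearMap.congr_fun h x) y

theorem expand_s (x : Λ) (T : Finset YoungDiagram) (hT : (S.s.repr x).support ⊆ T) :
    x = ∑ l ∈ T, S.s.repr x l • S.s l := by
  conv_lhs => rw [← S.s.linearCombination_repr x]
  rw [Finsupp.linearCombination_apply, Finsupp.sum]
  exact Finset.sum_subset hT (fun i _ hi => by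
    rw [Finsupp.notMem_support_iff.mp hi, zero_smul])

theorem expand_p (x : Λ) (T : Finset YoungDiagram) (hT : (S.p.repr x).support ⊆ T) :
    x = ∑ l ∈ T, S.p.repr x l • S.p l := by
  conv_lhs => rw [← S.p.linearCombination_repr x]
  rw [Finsupp.linearCombination_apply, Finsupp.sum]
  exact Finset.sum_subset hT (fun i _ hi => by
    rw [Finsupp.notMem_support_iff.mp hi, zero_smul])

/-- Skewing a Kronecker product:
`D_β(f ∗ g) = ∑_{λ,μ} g_{β,λ,μ} D_λ(f) ∗ D_μ(g)`, where
`g_{β,λ,μ} = ⟨s_β ∗ s_λ, s_μ⟩` are the Kronecker coefficients. -/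
theorem skewing_kron (β : YoungDiagram) (f g : Λ) :
    S.D (S.s β) (S.kron f g) =
      ∑ᶠ (l : YoungDiagram) (m : YoungDiagram),
        S.inner (S.kron (S.s β) (S.s l)) (S.s m) •
          S.kron (S.D (S.s l) f) (S.D (S.s m) g) := by
  classical
  set b : YoungDiagram →₀ ℚ := S.p.repr (S.s β) with hbdef
  set R : Finset YoungDiagram := b.support with hRdef
  set c : YoungDiagram → (YoungDiagram →₀ ℚ) := fun ρ => S.s.repr (S.p ρ) with hcdef
  set A : Finset YoungDiagram := R.biUnion (fun ρ => (c ρ).support) with hAdef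
  set F : YoungDiagram → Finset YoungDiagram :=
    fun l => (S.s.repr (S.kron (S.s β) (S.s l))).support with hFdef
  set E : Finset YoungDiagram := A ∪ A.biUnion F with hEdef
  have hc : ∀ σ x, (c σ) x = zee σ * S.p.repr (S.s x) σ := by
    intro σ x
    rw [hcdef, ← S.inner_s_repr (S.p σ) x, S.inner_symm, S.inner_p_repr]
  have hczero : ∀ l, l ∉ A → ∀ ρ ∈ R, c ρ l = 0 := by
    intro l hl ρ hρ
    by_contra h
    exact hl (Finset.mem_biUnion.mpr ⟨ρ, hρ, Finsupp.mem_support_iff.mpr h⟩)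
  have hkron0 : ∀ l, l ∉ A → S.kron (S.s β) (S.s l) = 0 := by
    intro l hl
    apply S.ext_inner_p
    intro τ
    rw [S.inner_kron_p, map_zero, LinearMap.zero_apply]
    by_cases hbτ : b τ = 0
    · rw [S.inner_p_repr (S.s β) τ, ← hbdef, hbτ, mul_zero, zero_mul]
    · have h0 : c τ l = 0 := hczero l hl τ (Finsupp.mem_support_iff.mpr hbτ)
      have h0' : (S.s.repr (S.p τ)) l = 0 := h0
      rw [S.inner_symm (S.s l) (S.p τ), S.inner_s_repr, h0', mul_zero]
  have hGzero : ∀ l, l ∉ A → ∀ m, S.inner (S.kron (S.s β) (S.s l)) (S.s m) = 0 := by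
    intro l hl m
    rw [hkron0 l hl, map_zero, LinearMap.zero_apply]
  have hGF : ∀ l m, m ∉ F l → S.inner (S.kron (S.s β) (S.s l)) (S.s m) = 0 := by
    intro l m hm
    rw [S.inner_s_repr]
    exact Finsupp.notMem_support_iff.mp hm
  -- turn the finsum into a finite double sum
  have hfin : (∑ᶠ (l : YoungDiagram) (m : YoungDiagram),
        S.inner (S.kron (S.s β) (S.s l)) (S.s m) •
          S.kron (S.D (S.s l) f) (S.D (S.s m) g))
      = ∑ l ∈ A, ∑ m ∈ E,
          S.inner (S.kron (S.s β) (S.s l)) (S.s m) •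
            S.kron (S.D (S.s l) f) (S.D (S.s m) g) := by
    have hinner : ∀ l, (∑ᶠ (m : YoungDiagram),
        S.inner (S.kron (S.s β) (S.s l)) (S.s m) •
          S.kron (S.D (S.s l) f) (S.D (S.s m) g))
        = ∑ m ∈ F l, S.inner (S.kron (S.s β) (S.s l)) (S.s m) •
            S.kron (S.D (S.s l) f) (S.D (S.s m) g) := by
      intro l
      apply finsum_eq_sum_of_support_subset
      intro m hm
      rw [Function.mem_support] at hm
      by_contra hmF
      exact hm (by rw [hGF l m hmF, zero_smul])
    rw [finsum_eq_sum_of_support_subset _ (s := A) (by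
      intro l hl
      rw [Function.mem_support] at hl
      by_contra hlA
      apply hl
      rw [hinner l]
      exact Finset.sum_eq_zero fun m _ => by rw [hGzero l hlA m, zero_smul])]
    refine Finset.sum_congr rfl fun l hl => ?_
    rw [hinner l]
    apply Finset.sum_subset
    · exact (Finset.subset_biUnion_of_mem F hl).trans Finset.subset_union_right
    · intro m _ hm
      rw [hGF l m hm, zero_smul]
  rw [hfin]
  -- the Kronecker coefficients in terms of the power-sum data
  have hGform : ∀ l m, S.inner (S.kron (S.s β) (S.s l)) (S.s m)
      = ∑ ρ ∈ R, b ρ * (c ρ l * c ρ m) := by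
    intro l m
    have hsm : S.s m = ∑ σ ∈ (S.p.repr (S.s m)).support ∪ R,
        (S.p.repr (S.s m)) σ • S.p σ := S.expand_p _ _ Finset.subset_union_left
    calc S.inner (S.kron (S.s β) (S.s l)) (S.s m)
        = ∑ σ ∈ (S.p.repr (S.s m)).support ∪ R,
            (S.p.repr (S.s m)) σ * (S.inner (S.s β) (S.p σ) * S.inner (S.s l) (S.p σ)) := by
          conv_lhs => rw [hsm]
          rw [map_sum]
          exact Finset.sum_congr rfl fun σ _ => by
            rw [map_smul, smul_eq_mul, S.inner_kron_p]
      _ = ∑ σ ∈ (S.p.repr (S.s m)).support ∪ R, b σ * (c σ l * c σ m) := by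
          refine Finset.sum_congr rfl fun σ _ => ?_
          rw [S.inner_p_repr (S.s β), S.inner_p_repr (S.s l), ← hbdef, hc σ l, hc σ m]
          ring
      _ = ∑ σ ∈ R, b σ * (c σ l * c σ m) := by
          refine (Finset.sum_subset Finset.subset_union_right fun σ _ hσ => ?_).symm
          rw [Finsupp.notMem_support_iff.mp hσ, zero_mul]
  -- key summation identity
  have hfac : ∀ (x : Λ) (τ : YoungDiagram) (ρ : YoungDiagram), ρ ∈ R →
      ∀ T : Finset YoungDiagram, (c ρ).support ⊆ T →
      ∑ l ∈ T, c ρ l * S.inner x (S.s l * S.p τ) = S.inner x (S.p ρ * S.p τ) := by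
    intro x τ ρ _ T hT
    have hexp : S.p ρ = ∑ l ∈ T, c ρ l • S.s l := S.expand_s _ _ hT
    rw [hexp, Finset.sum_mul, map_sum]
    exact Finset.sum_congr rfl fun l _ => by rw [smul_mul_assoc, map_smul, smul_eq_mul]
  -- compare inner products against all power sums
  apply S.ext_inner_p
  intro τ
  have hsβ : S.s β = ∑ ρ ∈ R, b ρ • S.p ρ := S.expand_p _ _ (Finset.Subset.refl _)
  calc S.inner (S.D (S.s β) (S.kron f g)) (S.p τ)
      = S.inner (S.kron f g) (S.s β * S.p τ) := S.D_adjoint _ _ _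
    _ = ∑ ρ ∈ R, b ρ * S.inner (S.kron f g) (S.p ρ * S.p τ) := by
        conv_lhs => rw [hsβ, Finset.sum_mul]
        rw [map_sum]
        exact Finset.sum_congr rfl fun ρ _ => by rw [smul_mul_assoc, map_smul, smul_eq_mul]
    _ = ∑ ρ ∈ R, b ρ * (S.inner f (S.p ρ * S.p τ) * S.inner g (S.p ρ * S.p τ)) := by
        refine Finset.sum_congr rfl fun ρ _ => ?_
        rw [S.p_mul, S.inner_kron_p]
    _ = ∑ ρ ∈ R, b ρ * ((∑ l ∈ A, c ρ l * S.inner f (S.s l * S.p τ)) *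
          (∑ m ∈ E, c ρ m * S.inner g (S.s m * S.p τ))) := by
        refine Finset.sum_congr rfl fun ρ hρ => ?_
        have hsubA : (c ρ).support ⊆ A := by
          rw [hAdef]; exact Finset.subset_biUnion_of_mem (fun ρ => (c ρ).support) hρ
        rw [hfac f τ ρ hρ A hsubA, hfac g τ ρ hρ E (hsubA.trans Finset.subset_union_left)]
    _ = ∑ ρ ∈ R, ∑ l ∈ A, ∑ m ∈ E, b ρ * (c ρ l * c ρ m) *
          (S.inner f (S.s l * S.p τ) * S.inner g (S.s m * S.p τ)) := by
        refine Finset.sum_congr rfl fun ρ _ => ?_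
        rw [Finset.sum_mul_sum, Finset.mul_sum]
        refine Finset.sum_congr rfl fun l _ => ?_
        rw [Finset.mul_sum]
        refine Finset.sum_congr rfl fun m _ => ?_
        ring
    _ = ∑ l ∈ A, ∑ m ∈ E, ∑ ρ ∈ R, b ρ * (c ρ l * c ρ m) *
          (S.inner f (S.s l * S.p τ) * S.inner g (S.s m * S.p τ)) := by
        rw [Finset.sum_comm]
        exact Finset.sum_congr rfl fun l _ => Finset.sum_comm
    _ = ∑ l ∈ A, ∑ m ∈ E, (∑ ρ ∈ R, b ρ * (c ρ l * c ρ m)) *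
          (S.inner f (S.s l * S.p τ) * S.inner g (S.s m * S.p τ)) := by
        refine Finset.sum_congr rfl fun l _ => Finset.sum_congr rfl fun m _ => ?_
        rw [Finset.sum_mul]
    _ = ∑ l ∈ A, ∑ m ∈ E, S.inner (S.kron (S.s β) (S.s l)) (S.s m) *
          (S.inner (S.D (S.s l) f) (S.p τ) * S.inner (S.D (S.s m) g) (S.p τ)) := by
        refine Finset.sum_congr rfl fun l _ => Finset.sum_congr rfl fun m _ => ?_
        rw [hGform l m, S.D_adjoint, S.D_adjoint]
    _ = S.inner (∑ l ∈ A, ∑ m ∈ E,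
          S.inner (S.kron (S.s β) (S.s l)) (S.s m) •
            S.kron (S.D (S.s l) f) (S.D (S.s m) g)) (S.p τ) := by
        rw [map_sum, LinearMap.sum_apply]
        refine Finset.sum_congr rfl fun l _ => ?_
        rw [map_sum, LinearMap.sum_apply]
        refine Finset.sum_congr rfl fun m _ => ?_
        rw [map_smul, LinearMap.smul_apply, smul_eq_mul, S.inner_kron_p]

end SymmFn
end
end
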